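/- Let K be a field in which −1 is not a square. There do not exist polynomials f, g, h ∈ K[x] with h ≠ 0 such that f² + g² = x·h². (Hence the quotient of the SO₂-action on the affine plane by x₁² + x₂² has no cross section.) -/
import Mathlib

open Polynomial

lemma coeff_sq_two_mul {K : Type*} [Field K] (p : Polynomial K) (n : ℕ)
    (hn : p.natDegree ≤ n) : (p ^ 2).coeff (2 * n) = (p.coeff n) ^ 2 := by
  rcases eq_or_lt_of_le hn with h | h
  · subst h
    rw [sq, two_mul, sq]
    have := coeff_mul_degree_add_degree p p
    rwa [leadingCoeff] at this
  · rw [p.coeff_eq_zero_of_natDegree_lt h, coeff_eq_zero_of_natDegree_lt, zero_pow two_ne_zero]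
    calc (p ^ 2).natDegree ≤ 2 * p.natDegree := natDegree_pow_le
      _ < 2 * n := by omega

/-- if `-1` is not a square in the field `K`, then there are no polynomials
`f, g, h ∈ K[x]` with `h ≠ 0` and `f² + g² = x·h²`.  (Hence the quotient of the
`SO₂`-action on the affine plane given by `x₁² + x₂²` has no cross section.) -/
theorem stmt10 {K : Type*} [Field K] (hK : ¬ IsSquare (-1 : K)) :
    ¬ ∃ f g h : Polynomial K, h ≠ 0 ∧ f ^ 2 + g ^ 2 = Polynomial.X * h ^ 2 := by
  rintro ⟨f, g, h, hh, heq⟩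
  have hXh : (Polynomial.X * h ^ 2 : Polynomial K) ≠ 0 :=
    mul_ne_zero Polynomial.X_ne_zero (pow_ne_zero _ hh)
  set M := max f.natDegree g.natDegree with hM
  set a := f.coeff M
  set b := g.coeff M
  -- a² + b² ≠ 0
  have key : a ^ 2 + b ^ 2 ≠ 0 := by
    intro hab
    have ha : a = 0 := by
      by_contra ha
      exact hK ⟨b * a⁻¹, by field_simp; linear_combination -hab⟩
    have hb : b = 0 := by
      have : b ^ 2 = 0 := by rw [ha] at hab; simpa using hab
      exact pow_eq_zero_iff two_ne_zero |>.mp this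
    -- then f = 0 and g = 0, contradicting X*h² ≠ 0
    have hf0 : f = 0 ∧ g = 0 := by
      rcases le_total g.natDegree f.natDegree with hle | hle
      · have hMf : M = f.natDegree := max_eq_left hle
        have hf : f = 0 := leadingCoeff_eq_zero.mp (by rwa [leadingCoeff, ← hMf])
        have : g.natDegree = 0 := by
          have := hf ▸ hMf; simp [natDegree_zero] at this; omega
        have hg : g = 0 := leadingCoeff_eq_zero.mp
          (by rw [leadingCoeff, this, ← show M = 0 by rw [hMf, hf]; simp]; exact hb)
        exact ⟨hf, hg⟩
      · have hMg : M = g.natDegree := max_eq_right hle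
        have hg : g = 0 := leadingCoeff_eq_zero.mp (by rwa [leadingCoeff, ← hMg])
        have : f.natDegree = 0 := by
          have := hg ▸ hMg; simp [natDegree_zero] at this; omega
        have hf : f = 0 := leadingCoeff_eq_zero.mp
          (by rw [leadingCoeff, this, ← show M = 0 by rw [hMg, hg]; simp]; exact ha)
        exact ⟨hf, hg⟩
    rw [hf0.1, hf0.2] at heq
    simp at heq
    exact hh heq
  -- LHS has natDegree 2M
  have hcoeff : (f ^ 2 + g ^ 2).coeff (2 * M) = a ^ 2 + b ^ 2 := by
    rw [coeff_add, coeff_sq_two_mul f M (le_max_left _ _),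
      coeff_sq_two_mul g M (le_max_right _ _)]
  have hge : 2 * M ≤ (f ^ 2 + g ^ 2).natDegree :=
    le_natDegree_of_ne_zero (by rw [hcoeff]; exact key)
  have hle : (f ^ 2 + g ^ 2).natDegree ≤ 2 * M := by
    refine natDegree_add_le_of_degree_le ?_ ?_
    · exact natDegree_pow_le.trans (by omega)
    · exact natDegree_pow_le.trans (by omega)
  have hdeg : (f ^ 2 + g ^ 2).natDegree = 2 * M := le_antisymm hle hge
  -- RHS has odd natDegree
  have hrhs : (Polynomial.X * h ^ 2 : Polynomial K).natDegree = 1 + 2 * h.natDegree := by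
    rw [natDegree_mul Polynomial.X_ne_zero (pow_ne_zero _ hh), natDegree_X, natDegree_pow]
  rw [heq, hrhs] at hdeg
  omega
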